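/- arXiv:2510.13882 — 7 statements merged into one kernel-verified Lean document; each statement's English description precedes it below -/
import Mathlib

section
/- Let k ≥ 1 and s ≥ 1 be integers, let f_1, …, f_s be monic pairwise coprime polynomials in (ZMod (2^k))[X] with M = ∏_{i=1}^s f_i, let M_i = ∏_{j ≠ i} f_j, let u_i satisfy M_i · u_i ≡ 1 (mod f_i), and let e_i be the image of M_i · u_i in R := (ZMod (2^k))[X]/(M). For any subset I ⊆ {1, …, s}, set e = ∑_{i ∈ I} e_i and h = ∏_{j ∉ I} f_j. Then the principal ideal of R generated by e equals the principal ideal of R generated by the image of h: Ideal.span {e} = Ideal.span {h mod M}. -/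
open Polynomial

theorem stmt_1 (k s : ℕ) (hk : 1 ≤ k) (hs : 1 ≤ s)
    (f : Fin s → Polynomial (ZMod (2 ^ k)))
    (hf : ∀ i, (f i).Monic)
    (hcop : ∀ i j, i ≠ j → IsCoprime (f i) (f j))
    (u : Fin s → Polynomial (ZMod (2 ^ k)))
    (hu : ∀ i, f i ∣ ((∏ j ∈ Finset.univ.erase i, f j) * u i - 1))
    (I : Finset (Fin s)) :
    Ideal.span {∑ i ∈ I, Ideal.Quotient.mk (Ideal.span {∏ i, f i})
        ((∏ j ∈ Finset.univ.erase i, f j) * u i)}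
      = Ideal.span {Ideal.Quotient.mk (Ideal.span {∏ i, f i}) (∏ j ∈ Iᶜ, f j)} := by
  set M : Polynomial (ZMod (2 ^ k)) := ∏ i, f i with hM
  set e : Polynomial (ZMod (2 ^ k)) := ∑ i ∈ I, (∏ j ∈ Finset.univ.erase i, f j) * u i with he
  set h : Polynomial (ZMod (2 ^ k)) := ∏ j ∈ Iᶜ, f j with hh
  have hsum : (∑ i ∈ I, Ideal.Quotient.mk (Ideal.span {M})
      ((∏ j ∈ Finset.univ.erase i, f j) * u i)) = Ideal.Quotient.mk (Ideal.span {M}) e := by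
    rw [he, map_sum]
  rw [hsum]
  -- h divides e in the polynomial ring
  have hdvd : h ∣ e := by
    refine Finset.dvd_sum fun i hi => ?_
    refine Dvd.dvd.mul_right ?_ _
    refine Finset.prod_dvd_prod_of_subset _ _ _ fun j hj => ?_
    simp only [Finset.mem_compl] at hj
    exact Finset.mem_erase.2 ⟨fun hji => hj (hji ▸ hi), Finset.mem_univ j⟩
  -- ∏_{i∈I} f i divides e - 1
  have hgdvd : (∏ i ∈ I, f i) ∣ e - 1 := by
    refine Finset.prod_dvd_of_coprime (fun i hi j hj hij => hcop i j hij) fun i hi => ?_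
    have : e - 1 = ((∏ j ∈ Finset.univ.erase i, f j) * u i - 1)
        + ∑ j ∈ I.erase i, (∏ l ∈ Finset.univ.erase j, f l) * u j := by
      rw [he, ← Finset.add_sum_erase _ _ hi]; ring
    rw [this]
    refine dvd_add (hu i) (Finset.dvd_sum fun j hj => ?_)
    refine Dvd.dvd.mul_right (Finset.dvd_prod_of_mem _ ?_) _
    exact Finset.mem_erase.2 ⟨(Finset.mem_erase.1 hj).1.symm ∘ Eq.symm ∘ Eq.symm, Finset.mem_univ i⟩
  have hMdvd : M ∣ (e - 1) * h := by
    rw [hM, ← Finset.prod_mul_prod_compl I f]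
    exact mul_dvd_mul hgdvd dvd_rfl
  apply le_antisymm
  · rw [Ideal.span_singleton_le_span_singleton]
    exact map_dvd _ hdvd
  · rw [Ideal.span_singleton_le_span_singleton]
    refine ⟨Ideal.Quotient.mk (Ideal.span {M}) h, ?_⟩
    rw [← map_mul, Ideal.Quotient.eq, Ideal.mem_span_singleton]
    have : h - e * h = -((e - 1) * h) := by ring
    rw [this]
    exact Dvd.dvd.neg_right hMdvd
end

section
/- Let k ≥ 1, N ≥ 1 and δ ≥ 1 be integers. Suppose X^N + 1 = g · h in (ZMod (2^k))[X] with g, h monic and IsCoprime g h. Let ḡ ∈ (ZMod 2)[X] be the image of g under coefficientwise reduction modulo 2. Assume that every nonzero element of the ideal generated by the image of ḡ in (ZMod 2)[X]/(X^N + 1) has Hamming weight at least δ. Then every nonzero element of the ideal generated by the image of g in (ZMod (2^k))[X]/(X^N + 1) has Hamming weight at least δ. -/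
open Polynomial

theorem stmt_2 (k N δ : ℕ) (hk : 1 ≤ k) (hN : 1 ≤ N) (hδ : 1 ≤ δ)
    (g h : Polynomial (ZMod (2 ^ k))) (hg : g.Monic) (hh : h.Monic)
    (hcop : IsCoprime g h)
    (hfact : (X : Polynomial (ZMod (2 ^ k))) ^ N + 1 = g * h)
    (hbin : ∀ p : Polynomial (ZMod 2), p.degree < (N : WithBot ℕ) → p ≠ 0 →
      Ideal.Quotient.mk (Ideal.span {(X : Polynomial (ZMod 2)) ^ N + 1}) p ∈
        Ideal.span {Ideal.Quotient.mk (Ideal.span {(X : Polynomial (ZMod 2)) ^ N + 1})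
          (g.map (ZMod.castHom (dvd_pow_self 2 (by omega : k ≠ 0)) (ZMod 2)))} →
      δ ≤ p.support.card) :
    ∀ p : Polynomial (ZMod (2 ^ k)), p.degree < (N : WithBot ℕ) → p ≠ 0 →
      Ideal.Quotient.mk (Ideal.span {(X : Polynomial (ZMod (2 ^ k))) ^ N + 1}) p ∈
        Ideal.span {Ideal.Quotient.mk (Ideal.span {(X : Polynomial (ZMod (2 ^ k))) ^ N + 1}) g} →
      δ ≤ p.support.card := by
  intro p hdeg hp hmem
  haveI : NeZero (2 ^ k) := ⟨by positivity⟩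
  haveI : Fact (Nat.Prime 2) := ⟨Nat.prime_two⟩
  haveI : Nontrivial (ZMod (2 ^ k)) := by
    haveI : Fact (1 < 2 ^ k) := ⟨by
      have h1 : (2:ℕ) ^ 1 ≤ 2 ^ k := Nat.pow_le_pow_right (by norm_num) hk
      omega⟩
    infer_instance
  -- Step 1: g ∣ p
  obtain ⟨c, hc⟩ := Ideal.mem_span_singleton.mp hmem
  obtain ⟨a, rfl⟩ := Ideal.Quotient.mk_surjective c
  have hz : Ideal.Quotient.mk (Ideal.span {(X : Polynomial (ZMod (2 ^ k))) ^ N + 1})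
      (p - g * a) = 0 := by
    rw [map_sub, map_mul, hc, sub_self]
  rw [Ideal.Quotient.eq_zero_iff_mem, Ideal.mem_span_singleton] at hz
  obtain ⟨b, hb⟩ := hz
  have hgp : g ∣ p := ⟨a + h * b, by linear_combination hb + b * hfact⟩
  -- Step 2: extract the 2-power
  have hsupp_ne : p.support.Nonempty := nonempty_support_iff.mpr hp
  have hSne : (p.support.image fun i => padicValNat 2 (p.coeff i).val).Nonempty :=
    hsupp_ne.image _
  set j := (p.support.image fun i => padicValNat 2 (p.coeff i).val).min' hSne with hj
  obtain ⟨i0, hi0mem, hi0⟩ := Finset.mem_image.mp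
    ((p.support.image fun i => padicValNat 2 (p.coeff i).val).min'_mem hSne)
  have hval0 : (p.coeff i0).val ≠ 0 := fun h0 =>
    mem_support_iff.mp hi0mem ((ZMod.val_eq_zero _).mp h0)
  have hdvall : ∀ i, 2 ^ j ∣ (p.coeff i).val := by
    intro i
    by_cases hi : i ∈ p.support
    · have hle : j ≤ padicValNat 2 (p.coeff i).val :=
        Finset.min'_le _ _ (Finset.mem_image_of_mem _ hi)
      exact dvd_trans (pow_dvd_pow 2 hle) pow_padicValNat_dvd
    · simp [notMem_support_iff.mp hi]
  have hjk : j < k := by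
    have h1 : 2 ^ j ≤ (p.coeff i0).val :=
      Nat.le_of_dvd (Nat.pos_of_ne_zero hval0) (hdvall i0)
    have h2 : (p.coeff i0).val < 2 ^ k := ZMod.val_lt _
    exact (Nat.pow_lt_pow_iff_right (by norm_num)).mp (lt_of_le_of_lt h1 h2)
  -- Define q with p = 2^j • q
  set q : Polynomial (ZMod (2 ^ k)) :=
    ∑ i ∈ p.support, monomial i ((((p.coeff i).val / 2 ^ j : ℕ) : ZMod (2 ^ k))) with hqdef
  have hqcoeff : ∀ m, q.coeff m = (((p.coeff m).val / 2 ^ j : ℕ) : ZMod (2 ^ k)) := by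
    intro m
    rw [hqdef, finset_sum_coeff]
    simp only [coeff_monomial]
    rw [Finset.sum_ite_eq' p.support m]
    split_ifs with hm
    · rfl
    · rw [notMem_support_iff.mp hm]
      simp
  have hpq : p = C (((2 ^ j : ℕ) : ZMod (2 ^ k))) * q := by
    ext m
    rw [coeff_C_mul, hqcoeff, ← Nat.cast_mul, Nat.mul_div_cancel' (hdvall m),
      ZMod.natCast_val, ZMod.cast_id]
  -- support relations
  have hqsupp : q.support ⊆ p.support := by
    intro m hm
    rw [mem_support_iff] at hm ⊢
    intro h0
    apply hm
    rw [hqcoeff]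
    rw [h0, ZMod.val_zero, Nat.zero_div, Nat.cast_zero]
  -- Step 3: divide q by g
  have hr := modByMonic_add_div q g
  set r := q %ₘ g with hrdef
  set d := q /ₘ g with hddef
  have hdvdr : g ∣ C (((2 ^ j : ℕ) : ZMod (2 ^ k))) * r := by
    have : C (((2 ^ j : ℕ) : ZMod (2 ^ k))) * r =
        p - g * (C (((2 ^ j : ℕ) : ZMod (2 ^ k))) * d) := by
      rw [hpq]
      ring_nf
      rw [← hr]
      ring
    rw [this]
    exact dvd_sub hgp ⟨_, rfl⟩
  have hCr0 : C (((2 ^ j : ℕ) : ZMod (2 ^ k))) * r = 0 := by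
    obtain ⟨w, hw⟩ := hdvdr
    rcases eq_or_ne w 0 with rfl | hw0
    · rw [hw, mul_zero]
    · exfalso
      have hdegr : r.degree < g.degree := degree_modByMonic_lt q hg
      have h1 : (C (((2 ^ j : ℕ) : ZMod (2 ^ k))) * r).degree ≤ r.degree := by
        calc (C (((2 ^ j : ℕ) : ZMod (2 ^ k))) * r).degree
            ≤ (C (((2 ^ j : ℕ) : ZMod (2 ^ k)))).degree + r.degree := degree_mul_le _ _
          _ ≤ 0 + r.degree := add_le_add_left (degree_C_le) _
          _ = r.degree := by rw [zero_add]
      have h2 : g.degree ≤ (g * w).degree := by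
        rw [mul_comm, hg.degree_mul]
        exact le_add_of_nonneg_left (zero_le_degree_iff.mpr hw0)
      rw [← hw] at h2
      exact absurd (lt_of_le_of_lt (h2.trans h1) hdegr) (lt_irrefl _)
  -- r reduces to 0 mod 2
  have hk0 : k ≠ 0 := by omega
  set φ := ZMod.castHom (dvd_pow_self 2 hk0) (ZMod 2) with hφ
  have hrbar : r.map φ = 0 := by
    ext m
    rw [coeff_map, coeff_zero]
    have hcoef : (((2 ^ j : ℕ) : ZMod (2 ^ k))) * r.coeff m = 0 := by
      have h' := congrArg (fun s => s.coeff m) hCr0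
      simp only [coeff_C_mul, coeff_zero] at h'
      exact h'
    have : ((2 ^ j * (r.coeff m).val : ℕ) : ZMod (2 ^ k)) = 0 := by
      rw [Nat.cast_mul, ZMod.natCast_val, ZMod.cast_id]
      exact hcoef
    rw [ZMod.natCast_eq_zero_iff] at this
    have hmul : (2:ℕ) ^ j * 2 ^ (k - j) ∣ 2 ^ j * (r.coeff m).val := by
      rw [← pow_add, show j + (k - j) = k by omega]
      exact this
    have h2dvd : 2 ^ (k - j) ∣ (r.coeff m).val :=
      (mul_dvd_mul_iff_left (by positivity : (2:ℕ)^j ≠ 0)).mp hmul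
    have : (2:ℕ) ∣ (r.coeff m).val :=
      dvd_trans (dvd_pow_self 2 (by omega : k - j ≠ 0)) h2dvd
    rw [ZMod.castHom_apply, ← ZMod.natCast_val, ZMod.natCast_eq_zero_iff]
    exact this
  -- ḡ ∣ q̄
  have hgbar_dvd : g.map φ ∣ q.map φ := by
    refine ⟨d.map φ, ?_⟩
    have := congrArg (Polynomial.map φ) hr
    rw [Polynomial.map_add, Polynomial.map_mul, hrbar, zero_add] at this
    exact this.symm
  -- q̄ coefficients
  have hqbar_coeff : ∀ m, (q.map φ).coeff m = (((p.coeff m).val / 2 ^ j : ℕ) : ZMod 2) := by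
    intro m
    rw [coeff_map, hqcoeff, map_natCast]
  -- q̄ ≠ 0
  have hqbar_ne : q.map φ ≠ 0 := by
    intro h0
    have := congrArg (fun s => s.coeff i0) h0
    simp only [coeff_zero] at this
    rw [hqbar_coeff] at this
    rw [ZMod.natCast_eq_zero_iff] at this
    have : 2 ^ j * 2 ∣ (p.coeff i0).val := (Nat.dvd_div_iff_mul_dvd (hdvall i0)).mp this
    rw [mul_comm, ← pow_succ'] at this
    exact pow_succ_padicValNat_not_dvd hval0 (by rwa [hi0])
  -- degree of q̄
  have hqbar_deg : (q.map φ).degree < (N : WithBot ℕ) := by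
    rw [degree_lt_iff_coeff_zero]
    intro m hm
    rw [hqbar_coeff]
    have : p.coeff m = 0 := (degree_lt_iff_coeff_zero p N).mp hdeg m hm
    rw [this, ZMod.val_zero, Nat.zero_div, Nat.cast_zero]
  -- apply hbin
  have hmem2 : Ideal.Quotient.mk (Ideal.span {(X : Polynomial (ZMod 2)) ^ N + 1}) (q.map φ) ∈
      Ideal.span {Ideal.Quotient.mk (Ideal.span {(X : Polynomial (ZMod 2)) ^ N + 1})
        (g.map φ)} :=
    Ideal.mem_span_singleton.mpr (map_dvd _ hgbar_dvd)
  have hfinal := hbin (q.map φ) hqbar_deg hqbar_ne hmem2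
  calc δ ≤ (q.map φ).support.card := hfinal
    _ ≤ p.support.card :=
      Finset.card_le_card ((support_map_subset φ q).trans hqsupp)
end

section
/- Let k ≥ 1 and s ≥ 1 be integers, let f_1, …, f_s be monic pairwise coprime polynomials in (ZMod (2^k))[X] with M = ∏_{i=1}^s f_i, let M_i = ∏_{j ≠ i} f_j, let u_i satisfy M_i · u_i ≡ 1 (mod f_i), let e_i be the image of M_i · u_i in R := (ZMod (2^k))[X]/(M), and for a subset I ⊆ {1, …, s} set e = ∑_{i ∈ I} e_i. Then the map from the ideal Ideal.span {e} of R to the product ring ∏_{i ∈ I} (ZMod (2^k))[X]/(f_i), sending an element c to the tuple whose i-th component is the reduction modulo f_i of any polynomial representative of c, is well defined and bijective. -/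
open Polynomial

theorem aux_crt {R : Type*} [CommRing R] {s : ℕ} (f u : Fin s → R) (M : R)
    (hdvdM : ∀ i, f i ∣ M)
    (hall : ∀ q : R, (∀ j, f j ∣ q) → M ∣ q)
    (hu : ∀ i, f i ∣ ((∏ j ∈ Finset.univ.erase i, f j) * u i - 1))
    (I : Finset (Fin s))
    (e : R ⧸ Ideal.span {M})
    (he : e = Ideal.Quotient.mk (Ideal.span {M})
      (∑ i ∈ I, (∏ j ∈ Finset.univ.erase i, f j) * u i)) :
    ∃ φ : ↥(Ideal.span {e}) →
        (∀ i : {i : Fin s // i ∈ I}, R ⧸ Ideal.span {f i.1}),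
      (∀ (p : R)
        (hp : Ideal.Quotient.mk (Ideal.span {M}) p ∈ Ideal.span {e})
        (i : {i : Fin s // i ∈ I}),
        φ ⟨Ideal.Quotient.mk (Ideal.span {M}) p, hp⟩ i
          = Ideal.Quotient.mk (Ideal.span {f i.1}) p) ∧
      Function.Bijective φ := by
  classical
  set Mi : Fin s → R := fun i => ∏ j ∈ Finset.univ.erase i, f j with hMi
  set erep : R := ∑ i ∈ I, Mi i * u i with herep
  have hMidvd : ∀ i j : Fin s, j ≠ i → f j ∣ Mi i := fun i j hji =>
    Finset.dvd_prod_of_mem f (Finset.mem_erase.mpr ⟨hji, Finset.mem_univ j⟩)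
  have hmkzero : ∀ q : R, (∀ j, f j ∣ q) →
      Ideal.Quotient.mk (Ideal.span {M}) q = 0 := by
    intro q hq
    rw [Ideal.Quotient.eq_zero_iff_mem, Ideal.mem_span_singleton]
    exact hall q hq
  have herep1 : ∀ j ∈ I, f j ∣ erep - 1 := by
    intro j hj
    have hE : erep - 1 = (∑ i ∈ I.erase j, Mi i * u i) + (Mi j * u j - 1) := by
      rw [herep, ← Finset.sum_erase_add I _ hj]; ring
    rw [hE]
    refine dvd_add (Finset.dvd_sum fun i hi => ?_) (hu j)
    exact (hMidvd i j (Finset.ne_of_mem_erase hi).symm).mul_right _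
  have herep0 : ∀ j ∉ I, f j ∣ erep := by
    intro j hj
    exact Finset.dvd_sum fun i hi => (hMidvd i j (fun h => hj (h ▸ hi))).mul_right _
  have hle : ∀ i : Fin s, Ideal.span {M} ≤ Ideal.span {f i} := fun i =>
    Ideal.span_singleton_le_span_singleton.mpr (hdvdM i)
  set ψ : ∀ i : Fin s, (R ⧸ Ideal.span {M}) →+* (R ⧸ Ideal.span {f i}) := fun i =>
    Ideal.Quotient.factor (hle i) with hψ
  refine ⟨fun x i => ψ i.1 x.1, fun p hp i => Ideal.Quotient.factor_mk _ p, ?_, ?_⟩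
  · -- injective
    intro x y hxy
    obtain ⟨z, hz⟩ := Ideal.mem_span_singleton'.mp (Ideal.sub_mem _ x.2 y.2)
    obtain ⟨q, rfl⟩ := Ideal.Quotient.mk_surjective z
    have hxy' : (x : R ⧸ Ideal.span {M}) - y =
        Ideal.Quotient.mk (Ideal.span {M}) (q * erep) := by
      rw [map_mul, ← he, hz]
    have h0 : Ideal.Quotient.mk (Ideal.span {M}) (q * erep) = 0 := by
      apply hmkzero
      intro j
      by_cases hj : j ∈ I
      · have h0 : ψ j ((x : R ⧸ Ideal.span {M}) - y) = 0 := by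
          rw [map_sub]
          have := congrFun hxy ⟨j, hj⟩
          simp only at this
          rw [this, sub_self]
        rw [hxy'] at h0
        rw [hψ, Ideal.Quotient.factor_mk, Ideal.Quotient.eq_zero_iff_mem,
          Ideal.mem_span_singleton] at h0
        exact h0
      · exact (herep0 j hj).mul_left q
    exact Subtype.ext (sub_eq_zero.mp (hxy'.trans h0))
  · -- surjective
    intro c
    choose g hg using fun i : {i : Fin s // i ∈ I} =>
      Ideal.Quotient.mk_surjective (c i)
    set p : R := ∑ i ∈ I.attach, Mi i.1 * u i.1 * g i with hp
    have hp0 : ∀ j ∉ I, f j ∣ p := by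
      intro j hj
      exact Finset.dvd_sum fun i _ =>
        ((hMidvd i.1 j (fun h => hj (h ▸ i.2))).mul_right _).mul_right _
    have hpg : ∀ i : {i : Fin s // i ∈ I}, f i.1 ∣ p - g i := by
      intro i
      have hE : p - g i = (∑ j ∈ I.attach.erase i, Mi j.1 * u j.1 * g j)
          + (Mi i.1 * u i.1 - 1) * g i := by
        rw [hp, ← Finset.sum_erase_add I.attach _ (Finset.mem_attach I i)]; ring
      rw [hE]
      refine dvd_add (Finset.dvd_sum fun j hj => ?_) ((hu i.1).mul_right _)
      have hne : i.1 ≠ j.1 := fun h =>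
        Finset.ne_of_mem_erase hj (Subtype.ext h.symm)
      exact ((hMidvd j.1 i.1 hne).mul_right _).mul_right _
    have hmem : Ideal.Quotient.mk (Ideal.span {M}) p ∈ Ideal.span {e} := by
      rw [Ideal.mem_span_singleton']
      refine ⟨Ideal.Quotient.mk (Ideal.span {M}) p, ?_⟩
      rw [he, ← map_mul, ← sub_eq_zero, ← map_sub]
      apply hmkzero
      intro j
      by_cases hj : j ∈ I
      · have hE : p * erep - p = p * (erep - 1) := by ring
        rw [hE]
        exact (herep1 j hj).mul_left p
      · exact dvd_sub ((hp0 j hj).mul_right erep) (hp0 j hj)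
    refine ⟨⟨Ideal.Quotient.mk (Ideal.span {M}) p, hmem⟩, ?_⟩
    funext i
    show ψ i.1 (Ideal.Quotient.mk (Ideal.span {M}) p) = c i
    rw [hψ, Ideal.Quotient.factor_mk, ← hg i]
    rw [Ideal.Quotient.eq, Ideal.mem_span_singleton]
    exact hpg i

theorem stmt_5 (k s : ℕ) (hk : 1 ≤ k) (hs : 1 ≤ s)
    (f : Fin s → Polynomial (ZMod (2 ^ k)))
    (hf : ∀ i, (f i).Monic)
    (hcop : ∀ i j, i ≠ j → IsCoprime (f i) (f j))
    (u : Fin s → Polynomial (ZMod (2 ^ k)))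
    (hu : ∀ i, f i ∣ ((∏ j ∈ Finset.univ.erase i, f j) * u i - 1))
    (I : Finset (Fin s))
    (e : Polynomial (ZMod (2 ^ k)) ⧸ Ideal.span {∏ i, f i})
    (he : e = ∑ i ∈ I, Ideal.Quotient.mk (Ideal.span {∏ i, f i})
      ((∏ j ∈ Finset.univ.erase i, f j) * u i)) :
    ∃ φ : ↥(Ideal.span {e}) →
        (∀ i : {i : Fin s // i ∈ I}, Polynomial (ZMod (2 ^ k)) ⧸ Ideal.span {f i.1}),
      (∀ (p : Polynomial (ZMod (2 ^ k)))
        (hp : Ideal.Quotient.mk (Ideal.span {∏ i, f i}) p ∈ Ideal.span {e})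
        (i : {i : Fin s // i ∈ I}),
        φ ⟨Ideal.Quotient.mk (Ideal.span {∏ i, f i}) p, hp⟩ i
          = Ideal.Quotient.mk (Ideal.span {f i.1}) p) ∧
      Function.Bijective φ := by
  classical
  refine aux_crt f u (∏ i, f i) (fun i => Finset.dvd_prod_of_mem f (Finset.mem_univ i))
    (fun q hq => Finset.prod_dvd_of_coprime
      (fun i _ j _ hij => hcop i j hij) (fun i _ => hq i)) hu I e ?_
  rw [he, map_sum]
end

section
/- Let k ≥ 1 and m ≥ 1 be integers. Every element e of the quotient ring (ZMod (2^k))[X]/(X^{2^m} + 1) satisfying e² = e equals 0 or 1. In particular, this ring has no nontrivial idempotents. -/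
open Polynomial

theorem stmt_6 (k m : ℕ) (hk : 1 ≤ k) (hm : 1 ≤ m)
    (e : Polynomial (ZMod (2 ^ k)) ⧸ Ideal.span {(X : Polynomial (ZMod (2 ^ k))) ^ (2 ^ m) + 1})
    (he : e ^ 2 = e) : e = 0 ∨ e = 1 := by
  revert e
  set I : Ideal (Polynomial (ZMod (2 ^ k))) :=
    Ideal.span {(X : Polynomial (ZMod (2 ^ k))) ^ (2 ^ m) + 1} with hI
  intro e he
  have h2k : (2:ℕ) ∣ 2 ^ k := dvd_pow_self 2 (by omega)
  set φ : Polynomial (ZMod (2 ^ k)) →+* ZMod 2 :=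
    (ZMod.castHom h2k (ZMod 2)).comp (evalRingHom (1 : ZMod (2 ^ k))) with hφ
  have hφI : ∀ f ∈ I, φ f = 0 := by
    intro f hf
    rw [hI, Ideal.mem_span_singleton] at hf
    obtain ⟨c, rfl⟩ := hf
    rw [map_mul]
    have : φ ((X : Polynomial (ZMod (2 ^ k))) ^ (2 ^ m) + 1) = 0 := by
      simp only [hφ, RingHom.comp_apply, coe_evalRingHom, eval_add, eval_pow, eval_X, eval_one,
        one_pow, map_add, map_one]
      decide
    rw [this, zero_mul]
  set ψ := Ideal.Quotient.lift I φ hφI with hψ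
  -- 2 ∣ x when cast to ZMod 2 is zero
  have hdvd2 : ∀ x : ZMod (2^k), ZMod.castHom h2k (ZMod 2) x = 0 → (2 : ZMod (2^k)) ∣ x := by
    intro x hx
    haveI : NeZero (2^k) := ⟨by positivity⟩
    have hv : ((x.val : ℕ) : ZMod 2) = 0 := by
      rwa [ZMod.castHom_apply, ZMod.cast_eq_val] at hx
    rw [ZMod.natCast_eq_zero_iff] at hv
    obtain ⟨t, ht⟩ := hv
    refine ⟨(t : ZMod (2^k)), ?_⟩
    have hx2 : ((x.val : ℕ) : ZMod (2^k)) = x := by rw [ZMod.natCast_val, ZMod.cast_id]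
    rw [← hx2, ht]
    push_cast
    ring
  -- 2 is nilpotent in the quotient
  have h2nil : IsNilpotent (2 : Polynomial (ZMod (2 ^ k)) ⧸ I) := by
    refine ⟨k, ?_⟩
    have h1 : (((2^k : ℕ) : ℕ) : Polynomial (ZMod (2 ^ k)) ⧸ I) = 0 := by
      rw [← map_natCast (Ideal.Quotient.mk I), ← Polynomial.C_eq_natCast, ZMod.natCast_self]
      simp
    push_cast at h1
    exact h1
  -- X - 1 is nilpotent in the quotient
  have haXnil : IsNilpotent (Ideal.Quotient.mk I ((X : Polynomial (ZMod (2 ^ k))) - 1)) := by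
    -- (X-1)^(2^m) - (X^(2^m)+1) is divisible by 2
    set P : Polynomial (ZMod (2 ^ k)) :=
      ((X : Polynomial (ZMod (2 ^ k))) - 1) ^ (2 ^ m) - ((X : Polynomial (ZMod (2 ^ k))) ^ (2 ^ m) + 1) with hP
    have hmap : P.map (ZMod.castHom h2k (ZMod 2)) = 0 := by
      rw [hP]
      push_cast [Polynomial.map_sub, Polynomial.map_add, Polynomial.map_pow, Polynomial.map_one,
        Polynomial.map_X]
      have hc : ((X : Polynomial (ZMod 2)) - 1) = X + 1 := CharTwo.sub_eq_add _ _
      rw [hc, add_pow_char_pow]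
      simp
    have hdvdP : Polynomial.C (2 : ZMod (2^k)) ∣ P := by
      rw [Polynomial.C_dvd_iff_dvd_coeff]
      intro i
      apply hdvd2
      have := congrArg (fun q => Polynomial.coeff q i) hmap
      simpa [Polynomial.coeff_map] using this
    obtain ⟨h, hh⟩ := hdvdP
    have hXm : Ideal.Quotient.mk I ((X : Polynomial (ZMod (2 ^ k))) ^ (2 ^ m) + 1) = 0 := by
      rw [Ideal.Quotient.eq_zero_iff_mem, hI]
      exact Ideal.subset_span rfl
    have key : (Ideal.Quotient.mk I ((X : Polynomial (ZMod (2 ^ k))) - 1)) ^ (2 ^ m)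
        = 2 * Ideal.Quotient.mk I h := by
      rw [← map_pow]
      have : ((X : Polynomial (ZMod (2 ^ k))) - 1) ^ (2 ^ m)
          = ((X : Polynomial (ZMod (2 ^ k))) ^ (2 ^ m) + 1) + Polynomial.C 2 * h := by
        rw [← hh, hP]; ring
      rw [this, map_add, map_mul, hXm, zero_add, map_ofNat, map_ofNat]
    obtain ⟨n, hn⟩ := h2nil
    refine ⟨2 ^ m * n, ?_⟩
    rw [pow_mul, key, mul_pow, hn, zero_mul]
  -- kernel of ψ is nil
  have hker : ∀ x : Polynomial (ZMod (2 ^ k)) ⧸ I, ψ x = 0 → IsNilpotent x := by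
    intro x hx
    obtain ⟨g, rfl⟩ := Ideal.Quotient.mk_surjective x
    rw [hψ, Ideal.Quotient.lift_mk] at hx
    have heval : (2 : ZMod (2^k)) ∣ g.eval 1 := by
      apply hdvd2
      simpa [hφ] using hx
    obtain ⟨c, hc⟩ := heval
    obtain ⟨q, hq⟩ := Polynomial.X_sub_C_dvd_sub_C_eval (a := (1 : ZMod (2^k))) (p := g)
    have hg : g = ((X : Polynomial (ZMod (2 ^ k))) - 1) * q + Polynomial.C (2 * c) := by
      rw [← hc]
      have : Polynomial.C (1 : ZMod (2^k)) = 1 := Polynomial.C_1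
      rw [← this, ← hq]; ring
    rw [hg, map_add, map_mul]
    refine Commute.isNilpotent_add (Commute.all _ _) ?_ ?_
    · exact (Commute.all _ _).isNilpotent_mul_right haXnil
    · have : Ideal.Quotient.mk I (Polynomial.C (2 * c))
          = 2 * Ideal.Quotient.mk I (Polynomial.C c) := by
        rw [map_mul, map_mul, map_ofNat, map_ofNat]
      rw [this]
      exact (Commute.all _ _).isNilpotent_mul_right h2nil
  -- idempotent + nilpotent implies zero
  have hidem : ∀ x : Polynomial (ZMod (2 ^ k)) ⧸ I, x ^ 2 = x → IsNilpotent x → x = 0 := by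
    intro x hx ⟨n, hn⟩
    have hpow : ∀ j : ℕ, x ^ (j + 1) = x := by
      intro j
      induction j with
      | zero => simp
      | succ j ih => rw [pow_succ, ih, ← pow_two, hx]
    calc x = x ^ (n + 1) := (hpow n).symm
    _ = x ^ n * x := pow_succ x n
    _ = 0 := by rw [hn, zero_mul]
  have hψe : ψ e = 0 ∨ ψ e = 1 := by
    have : ∀ y : ZMod 2, y = 0 ∨ y = 1 := by decide
    exact this _
  rcases hψe with h0 | h1
  · left; exact hidem e he (hker e h0)
  · right
    have h1e : (1 - e) ^ 2 = 1 - e := by linear_combination he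
    have : 1 - e = 0 := hidem _ h1e (hker _ (by rw [map_sub, map_one, h1, sub_self]))
    linear_combination -this
end

section
/- Let k ≥ 1 and m ≥ 1 be integers, let R = (ZMod (2^k))[X]/(X^{2^m} + 1), and let x denote the image of X in R. Then R is a local ring, its unique maximal ideal is Ideal.span {2, x + 1} (the ideal generated by the elements 2 and x + 1 of R), and the quotient ring R / Ideal.span {2, x + 1} is isomorphic as a ring to ZMod 2. -/
open Polynomial

set_option maxHeartbeats 1000000 in
theorem stmt_7 (k m : ℕ) (hk : 1 ≤ k) (hm : 1 ≤ m)
    (x : Polynomial (ZMod (2 ^ k)) ⧸ Ideal.span {(X : Polynomial (ZMod (2 ^ k))) ^ (2 ^ m) + 1})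
    (hx : x = Ideal.Quotient.mk
      (Ideal.span {(X : Polynomial (ZMod (2 ^ k))) ^ (2 ^ m) + 1}) X) :
    IsLocalRing
        (Polynomial (ZMod (2 ^ k)) ⧸ Ideal.span {(X : Polynomial (ZMod (2 ^ k))) ^ (2 ^ m) + 1}) ∧
    (Ideal.span {(2 : Polynomial (ZMod (2 ^ k)) ⧸
        Ideal.span {(X : Polynomial (ZMod (2 ^ k))) ^ (2 ^ m) + 1}), x + 1}).IsMaximal ∧
    (∀ J : Ideal (Polynomial (ZMod (2 ^ k)) ⧸
        Ideal.span {(X : Polynomial (ZMod (2 ^ k))) ^ (2 ^ m) + 1}),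
      J.IsMaximal → J = Ideal.span {(2 : Polynomial (ZMod (2 ^ k)) ⧸
        Ideal.span {(X : Polynomial (ZMod (2 ^ k))) ^ (2 ^ m) + 1}), x + 1}) ∧
    Nonempty (((Polynomial (ZMod (2 ^ k)) ⧸
        Ideal.span {(X : Polynomial (ZMod (2 ^ k))) ^ (2 ^ m) + 1}) ⧸
      Ideal.span {(2 : Polynomial (ZMod (2 ^ k)) ⧸
        Ideal.span {(X : Polynomial (ZMod (2 ^ k))) ^ (2 ^ m) + 1}), x + 1}) ≃+* ZMod 2) := by
  have hk0 : k ≠ 0 := by omega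
  haveI : NeZero (2 ^ k) := ⟨pow_ne_zero k two_ne_zero⟩
  subst hx
  set A : Type := ZMod (2 ^ k) with hA
  set I : Ideal (Polynomial A) := Ideal.span {(X : Polynomial A) ^ (2 ^ m) + 1} with hI
  set R : Type := Polynomial A ⧸ I with hR
  set π : Polynomial A →+* R := Ideal.Quotient.mk I with hπ
  set M : Ideal R := Ideal.span {(2 : R), π X + 1} with hM
  -- casting hom
  have hdvd : 2 ∣ 2 ^ k := dvd_pow_self 2 hk0
  set c : A →+* ZMod 2 := ZMod.castHom hdvd (ZMod 2) with hc
  -- key fact: element of A mapping to 0 is divisible by 2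
  have hker : ∀ a : A, c a = 0 → ∃ t : A, a = 2 * t := by
    intro a ha
    have hv : ((a.val : ℕ) : ZMod 2) = 0 := by
      rw [ZMod.natCast_val]
      rwa [hc, ZMod.castHom_apply] at ha
    obtain ⟨t, ht⟩ := (ZMod.natCast_eq_zero_iff _ _).mp hv
    refine ⟨(t : A), ?_⟩
    rw [← ZMod.natCast_zmod_val a, ht]
    push_cast; ring
  -- the evaluation map ψ : A[X] → ZMod 2, X ↦ 1
  set ψ : Polynomial A →+* ZMod 2 := eval₂RingHom c 1 with hψ
  have hψI : ∀ p ∈ I, ψ p = 0 := by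
    intro p hp
    rw [hI, Ideal.mem_span_singleton] at hp
    obtain ⟨q, rfl⟩ := hp
    rw [map_mul]
    have h1 : ψ ((X : Polynomial A) ^ (2 ^ m) + 1) = 0 := by
      rw [hψ]
      simp only [coe_eval₂RingHom, eval₂_add, eval₂_pow, eval₂_X, eval₂_one, one_pow]
      decide
    rw [h1, zero_mul]
  set φ : R →+* ZMod 2 := Ideal.Quotient.lift I ψ hψI with hφ
  have hφπ : ∀ p, φ (π p) = ψ p := fun p => Ideal.Quotient.lift_mk I ψ hψI
  have hφ2 : φ 2 = 0 := by
    have h2 : (2 : R) = π (2 : Polynomial A) := by rw [map_ofNat]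
    rw [h2, hφπ]
    have h3 : ψ (2 : Polynomial A) = (2 : ZMod 2) := map_ofNat ψ 2
    rw [h3]; decide
  have hφx : φ (π X + 1) = 0 := by
    rw [← map_one π, ← map_add, hφπ, hψ]
    simp only [coe_eval₂RingHom, eval₂_add, eval₂_X, eval₂_one]
    decide
  -- kernel of φ equals M
  have hkerφ : RingHom.ker φ = M := by
    apply le_antisymm
    · intro r hr
      obtain ⟨p, rfl⟩ := Ideal.Quotient.mk_surjective (I := I) r
      rw [RingHom.mem_ker] at hr
      rw [show Ideal.Quotient.mk I p = π p from rfl, hφπ] at hr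
      obtain ⟨q, hq⟩ : (X + 1 : Polynomial A) ∣ p - C (p.eval (-1)) := by
        have h := X_sub_C_dvd_sub_C_eval (a := (-1 : A)) (p := p)
        rwa [map_neg, map_one, sub_neg_eq_add] at h
      have hpeq : p = (X + 1) * q + C (p.eval (-1)) := by
        rw [← hq]; ring
      have hc0 : c (p.eval (-1)) = 0 := by
        rw [hpeq, map_add, map_mul, hψ] at hr
        simp only [coe_eval₂RingHom, eval₂_add, eval₂_X, eval₂_one, eval₂_C] at hr
        have h11 : (1 + 1 : ZMod 2) = 0 := by decide
        rwa [h11, zero_mul, zero_add] at hr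
      obtain ⟨t, ht⟩ := hker _ hc0
      have h2M : (2 : R) ∈ M := Ideal.subset_span (Set.mem_insert _ _)
      have hxM : π X + 1 ∈ M := Ideal.subset_span (Set.mem_insert_of_mem _ rfl)
      have hfin : π p = (π X + 1) * π q + 2 * π (C t) := by
        rw [hpeq, ht]
        have e1 : (C (2 * t) : Polynomial A) = 2 * C t := by
          rw [map_mul, map_ofNat]
        rw [e1]
        simp only [map_add, map_mul, map_one, map_ofNat]
      show π p ∈ M
      rw [hfin]
      exact Ideal.add_mem _ (Ideal.mul_mem_right _ _ hxM) (Ideal.mul_mem_right _ _ h2M)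
    · rw [hM, Ideal.span_le]
      intro r hr
      simp only [Set.mem_insert_iff, Set.mem_singleton_iff] at hr
      rcases hr with rfl | rfl
      · rw [SetLike.mem_coe, RingHom.mem_ker]; exact hφ2
      · rw [SetLike.mem_coe, RingHom.mem_ker]; exact hφx
  -- surjectivity of φ
  have hsurj : Function.Surjective φ := by
    intro y
    have hy : y = 0 ∨ y = 1 := by revert y; decide
    rcases hy with rfl | rfl
    · exact ⟨0, map_zero φ⟩
    · exact ⟨1, map_one φ⟩
  -- M maximal
  have hMmax : M.IsMaximal := hkerφ ▸ RingHom.ker_isMaximal_of_surjective φ hsurj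
  -- nilpotency of 2 in R
  have h2nil : (2 : R) ^ k = 0 := by
    have h1 : ((2 ^ k : ℕ) : R) = 0 := by
      rw [show (((2 ^ k : ℕ)) : R) = π (((2 ^ k : ℕ)) : Polynomial A) from
          (map_natCast π _).symm,
        show (((2 ^ k : ℕ)) : Polynomial A) = C (((2 ^ k : ℕ)) : A) from
          (Polynomial.C_eq_natCast _).symm,
        ZMod.natCast_self, map_zero, map_zero]
    calc (2 : R) ^ k = ((2 ^ k : ℕ) : R) := by push_cast; ring
    _ = 0 := h1
  -- nilpotency of π X + 1
  have hxnil : ∃ n : ℕ, (π X + 1) ^ n = 0 := by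
    set p : Polynomial A := (X + 1) ^ (2 ^ m) - (X ^ (2 ^ m) + 1) with hp
    have hmap : Polynomial.map c p = 0 := by
      rw [hp, Polynomial.map_sub, Polynomial.map_add, Polynomial.map_pow,
        Polynomial.map_pow, Polynomial.map_add, Polynomial.map_X, Polynomial.map_one]
      haveI : Fact (Nat.Prime 2) := ⟨Nat.prime_two⟩
      rw [add_pow_char_pow]
      simp
    have hmem : p ∈ Ideal.span {(2 : Polynomial A)} := by
      have h1 : p ∈ RingHom.ker (mapRingHom c) := by
        rw [RingHom.mem_ker, coe_mapRingHom]; exact hmap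
      rw [Polynomial.ker_mapRingHom] at h1
      have h2 : RingHom.ker c ≤ Ideal.span {(2 : A)} := by
        intro a ha
        rw [RingHom.mem_ker] at ha
        obtain ⟨t, ht⟩ := hker a ha
        rw [Ideal.mem_span_singleton]
        exact ⟨t, ht⟩
      have h3 := Ideal.map_mono (f := (C : A →+* Polynomial A)) h2
      have h4 : Ideal.map (C : A →+* Polynomial A) (Ideal.span {(2 : A)})
          = Ideal.span {(2 : Polynomial A)} := by
        rw [Ideal.map_span, Set.image_singleton, map_ofNat]
      exact h4 ▸ h3 h1
    rw [Ideal.mem_span_singleton] at hmem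
    obtain ⟨q, hq⟩ := hmem
    refine ⟨2 ^ m * k, ?_⟩
    have hx1 : (π X + 1) ^ (2 ^ m) = 2 * π q := by
      rw [← map_one π, ← map_add, ← map_pow]
      have h5 : ((X : Polynomial A) + 1) ^ (2 ^ m)
          = ((X : Polynomial A) ^ (2 ^ m) + 1) + 2 * q := by
        rw [← hq, hp]; ring
      rw [h5, map_add, map_mul]
      have h0 : π ((X : Polynomial A) ^ (2 ^ m) + 1) = 0 := by
        rw [hπ, Ideal.Quotient.eq_zero_iff_mem, hI]
        exact Ideal.subset_span rfl
      rw [h0, zero_add, map_ofNat]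
    rw [pow_mul, hx1, mul_pow, h2nil, zero_mul]
  -- uniqueness of maximal ideal
  have huniq : ∀ J : Ideal R, J.IsMaximal → J = M := by
    intro J hJ
    have hJp : J.IsPrime := hJ.isPrime
    have h2J : (2 : R) ∈ J := hJp.mem_of_pow_mem k (h2nil ▸ J.zero_mem)
    obtain ⟨n, hn⟩ := hxnil
    have hxJ : π X + 1 ∈ J := hJp.mem_of_pow_mem n (hn ▸ J.zero_mem)
    have hle : M ≤ J := by
      rw [hM, Ideal.span_le]
      intro r hr
      simp only [Set.mem_insert_iff, Set.mem_singleton_iff] at hr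
      rcases hr with rfl | rfl
      · exact h2J
      · exact hxJ
    exact (hMmax.eq_of_le hJ.ne_top hle).symm
  refine ⟨?_, hMmax, huniq, ?_⟩
  · exact IsLocalRing.of_unique_max_ideal ⟨M, hMmax, huniq⟩
  · exact ⟨(Ideal.quotEquivOfEq hkerφ.symm).trans (RingHom.quotientKerEquivOfSurjective hsurj)⟩
end

section
/- Let A be a commutative ring, let f ∈ A[X], and let r ≥ 0 be an integer. Then (X + 1)^r divides f in A[X] if and only if (Polynomial.hasseDeriv i f).eval (−1) = 0 for every i with 0 ≤ i < r. -/
open Polynomial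

theorem stmt_12 {A : Type*} [CommRing A] (f : Polynomial A) (r : ℕ) :
    (X + 1) ^ r ∣ f ↔ ∀ i < r, (Polynomial.hasseDeriv i f).eval (-1) = 0 := by
  have key : (X + 1) ^ r ∣ f ↔ X ^ r ∣ taylor (-1) f := by
    constructor
    · rintro ⟨g, rfl⟩
      refine ⟨taylor (-1) g, ?_⟩
      rw [taylor_mul]
      congr 1
      simp [taylor_apply, add_comp, pow_comp]
    · rintro ⟨g, hg⟩
      refine ⟨taylor 1 g, taylor_injective (-1) ?_⟩
      rw [hg, taylor_mul]
      congr 1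
      · simp [taylor_apply, pow_comp, add_comp]
      · rw [taylor_taylor]
        simp [taylor_zero]
  rw [key, Polynomial.X_pow_dvd_iff]
  simp only [taylor_coeff]
end

section
/- Let k ≥ 1 and N ≥ 1 be integers and let a be a natural number with gcd(a, 2N) = 1. Let R = (ZMod (2^k))[X]/(X^N + 1) and let x denote the image of X in R. Then there exists a ZMod (2^k)-algebra automorphism σ_a of R with σ_a(x) = x^a. Moreover, if b is a natural number with a · b ≡ 1 (mod 2N), then σ_b ∘ σ_a is the identity map on R. -/
open Polynomial

noncomputable section StmtAux

variable (k N : ℕ)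

local notation "Rq" => Polynomial (ZMod (2 ^ k)) ⧸ Ideal.span {(X : Polynomial (ZMod (2 ^ k))) ^ N + 1}

private lemma xN_eq (hN : 1 ≤ N) :
    (Ideal.Quotient.mk (Ideal.span {(X : Polynomial (ZMod (2 ^ k))) ^ N + 1}) X) ^ N = -1 := by
  have h : (Ideal.Quotient.mk (Ideal.span {(X : Polynomial (ZMod (2 ^ k))) ^ N + 1}))
      ((X : Polynomial (ZMod (2 ^ k))) ^ N + 1) = 0 :=
    Ideal.Quotient.eq_zero_iff_mem.mpr (Ideal.subset_span rfl)
  rw [map_add, map_pow, map_one] at h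
  linear_combination h

private lemma x2N_eq (hN : 1 ≤ N) :
    (Ideal.Quotient.mk (Ideal.span {(X : Polynomial (ZMod (2 ^ k))) ^ N + 1}) X) ^ (2 * N) = 1 := by
  rw [two_mul, pow_add, xN_eq k N hN]
  ring

private def fodd (c : ℕ) (hc : Odd c) (hN : 1 ≤ N) : Rq →ₐ[ZMod (2 ^ k)] Rq :=
  Ideal.Quotient.liftₐ _
    (aeval ((Ideal.Quotient.mk (Ideal.span {(X : Polynomial (ZMod (2 ^ k))) ^ N + 1}) X) ^ c))
    (by
      intro p hp
      rw [Ideal.mem_span_singleton] at hp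
      obtain ⟨q, rfl⟩ := hp
      rw [map_mul]
      have : (aeval ((Ideal.Quotient.mk (Ideal.span {(X : Polynomial (ZMod (2 ^ k))) ^ N + 1}) X) ^ c))
          ((X : Polynomial (ZMod (2 ^ k))) ^ N + 1) = 0 := by
        rw [map_add, map_pow, map_one, aeval_X, ← pow_mul, mul_comm c N, pow_mul, xN_eq k N hN]
        obtain ⟨m, rfl⟩ := hc
        rw [pow_succ, pow_mul]
        norm_num
      rw [this, zero_mul])

private lemma fodd_x (c : ℕ) (hc : Odd c) (hN : 1 ≤ N) :
    fodd k N c hc hN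
      (Ideal.Quotient.mk (Ideal.span {(X : Polynomial (ZMod (2 ^ k))) ^ N + 1}) X) =
    (Ideal.Quotient.mk (Ideal.span {(X : Polynomial (ZMod (2 ^ k))) ^ N + 1}) X) ^ c := by
  simp [fodd]
  exact aeval_X _

-- if a*b ≡ 1 mod 2N and g x = x^a, h x = x^b then h ∘ g = id
private lemma comp_eq_id (hN : 1 ≤ N) (a b : ℕ) (hab : a * b ≡ 1 [MOD 2 * N])
    (g h : Rq →ₐ[ZMod (2 ^ k)] Rq)
    (hg : g (Ideal.Quotient.mk (Ideal.span {(X : Polynomial (ZMod (2 ^ k))) ^ N + 1}) X)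
        = (Ideal.Quotient.mk (Ideal.span {(X : Polynomial (ZMod (2 ^ k))) ^ N + 1}) X) ^ a)
    (hh : h (Ideal.Quotient.mk (Ideal.span {(X : Polynomial (ZMod (2 ^ k))) ^ N + 1}) X)
        = (Ideal.Quotient.mk (Ideal.span {(X : Polynomial (ZMod (2 ^ k))) ^ N + 1}) X) ^ b) :
    h.comp g = AlgHom.id _ _ := by
  set x := Ideal.Quotient.mk (Ideal.span {(X : Polynomial (ZMod (2 ^ k))) ^ N + 1}) X with hxdef
  obtain ⟨q, hq⟩ : ∃ q, a * b = 2 * N * q + 1 := by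
    have h1 : a * b % (2 * N) = 1 % (2 * N) := hab
    have h2 : 1 % (2 * N) = 1 := Nat.mod_eq_of_lt (by omega)
    refine ⟨a * b / (2 * N), ?_⟩
    have := Nat.div_add_mod (a * b) (2 * N)
    omega
  apply Ideal.Quotient.algHom_ext
  apply Polynomial.algHom_ext
  show h (g x) = x
  rw [hg, map_pow, hh, ← pow_mul, mul_comm b a, hq, pow_add, pow_mul, x2N_eq k N hN]
  ring

end StmtAux

theorem stmt_14 (k N : ℕ) (hk : 1 ≤ k) (hN : 1 ≤ N) (a : ℕ) (ha : Nat.gcd a (2 * N) = 1)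
    (x : Polynomial (ZMod (2 ^ k)) ⧸ Ideal.span {(X : Polynomial (ZMod (2 ^ k))) ^ N + 1})
    (hx : x = Ideal.Quotient.mk
      (Ideal.span {(X : Polynomial (ZMod (2 ^ k))) ^ N + 1}) X) :
    (∃ σa : (Polynomial (ZMod (2 ^ k)) ⧸ Ideal.span {(X : Polynomial (ZMod (2 ^ k))) ^ N + 1})
        ≃ₐ[ZMod (2 ^ k)]
        (Polynomial (ZMod (2 ^ k)) ⧸ Ideal.span {(X : Polynomial (ZMod (2 ^ k))) ^ N + 1}),
      σa x = x ^ a) ∧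
    (∀ b : ℕ, a * b ≡ 1 [MOD 2 * N] →
      ∀ σa σb : (Polynomial (ZMod (2 ^ k)) ⧸ Ideal.span {(X : Polynomial (ZMod (2 ^ k))) ^ N + 1})
          ≃ₐ[ZMod (2 ^ k)]
          (Polynomial (ZMod (2 ^ k)) ⧸ Ideal.span {(X : Polynomial (ZMod (2 ^ k))) ^ N + 1}),
        σa x = x ^ a → σb x = x ^ b →
        ∀ y, σb (σa y) = y) := by
  subst hx
  have hNZ : NeZero (2 * N) := ⟨by omega⟩
  -- a is odd
  have haodd : Odd a := by
    rcases Nat.even_or_odd a with he | ho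
    · exfalso
      obtain ⟨c, rfl⟩ := he
      have : 2 ∣ Nat.gcd (c + c) (2 * N) := Nat.dvd_gcd ⟨c, by ring⟩ ⟨N, rfl⟩
      omega
    · exact ho
  constructor
  · -- construct inverse exponent b
    set u := ZMod.unitOfCoprime a ha with hu
    set b := ((u⁻¹ : (ZMod (2 * N))ˣ) : ZMod (2 * N)).val with hb
    have hbcast : ((b : ℕ) : ZMod (2 * N)) = ((u⁻¹ : (ZMod (2 * N))ˣ) : ZMod (2 * N)) := by
      simp [hb, ZMod.natCast_val, ZMod.cast_id]
    have hab : a * b ≡ 1 [MOD 2 * N] := by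
      have : ((a * b : ℕ) : ZMod (2 * N)) = ((1 : ℕ) : ZMod (2 * N)) := by
        push_cast
        rw [hbcast]
        have : ((a : ℕ) : ZMod (2 * N)) = (u : ZMod (2 * N)) := by
          simp [hu, ZMod.coe_unitOfCoprime]
        rw [this, ← Units.val_mul, mul_inv_cancel, Units.val_one]
      exact (ZMod.natCast_eq_natCast_iff _ _ _).mp this
    have hba : b * a ≡ 1 [MOD 2 * N] := by
      have := hab
      unfold Nat.ModEq at this ⊢
      rwa [Nat.mul_comm b a]
    have hbodd : Odd b := by
      rcases Nat.even_or_odd b with he | ho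
      · exfalso
        have h1 : a * b % (2 * N) = 1 % (2 * N) := hab
        have h2 : 1 % (2 * N) = 1 := Nat.mod_eq_of_lt (by omega)
        obtain ⟨c, hc⟩ := he
        have hdvd : 2 ∣ a * b := ⟨a * c, by rw [hc]; ring⟩
        obtain ⟨m, hm⟩ := hdvd
        have h0 := Nat.div_add_mod (a * b) (2 * N)
        rw [mul_assoc] at h0
        have h3 : a * b = 2 * (N * (a * b / (2 * N))) + 1 := by omega
        set t := N * (a * b / (2 * N))
        omega
      · exact ho
    refine ⟨AlgEquiv.ofAlgHom (fodd k N a haodd hN) (fodd k N b hbodd hN) ?_ ?_, ?_⟩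
    · exact comp_eq_id k N hN b a hba (fodd k N b hbodd hN) (fodd k N a haodd hN)
        (fodd_x k N b hbodd hN) (fodd_x k N a haodd hN)
    · exact comp_eq_id k N hN a b hab (fodd k N a haodd hN) (fodd k N b hbodd hN)
        (fodd_x k N a haodd hN) (fodd_x k N b hbodd hN)
    · exact fodd_x k N a haodd hN
  · intro b hab σa σb hσa hσb y
    have := comp_eq_id k N hN a b hab σa.toAlgHom σb.toAlgHom hσa hσb
    have := congrArg (fun f => f y) this
    simpa using this
end
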